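/- arXiv:1908.02157 — 2 statements merged into one kernel-verified Lean document; each statement's English description precedes it below -/
import Mathlib

section
/- Let u ∈ C^∞(ℝ×(−1,1)) and define W : ℝ×ℝ → ℝ by W(t,r) := u(t − log cosh r, tanh r). Then W satisfies the reduced Yang-Mills equation ∂_t² W(t,r) − ∂_r² W(t,r) = W(t,r)(1 − W(t,r)²)/cosh(r)² for all (t,r) ∈ ℝ² if and only if u satisfies [∂_s² + 2y ∂_s∂_y + ∂_s − (1−y²)∂_y² + 2y ∂_y − 1] u(s,y) = −u(s,y)³ for all (s,y) ∈ ℝ×(−1,1). -/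
open MeasureTheory Set ENNReal

/-- Partial derivative in the first variable. -/
noncomputable def dS (u : ℝ → ℝ → ℝ) (s y : ℝ) : ℝ := deriv (fun s' => u s' y) s

/-- Partial derivative in the second variable. -/
noncomputable def dY (u : ℝ → ℝ → ℝ) (s y : ℝ) : ℝ := deriv (fun y' => u s y') y

/-- The hyperboloidal wave operator
`∂_s² + 2y ∂_s∂_y + ∂_s − (1−y²)∂_y² + 2y ∂_y`. -/
noncomputable def waveOp (u : ℝ → ℝ → ℝ) (s y : ℝ) : ℝ :=
  dS (dS u) s y + 2 * y * dS (dY u) s y + dS u s y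
    - (1 - y^2) * dY (dY u) s y + 2 * y * dY u s y

/-- The function `W(t,r) = u(t − log cosh r, tanh r)` in standard coordinates. -/
noncomputable def hypCoord (u : ℝ → ℝ → ℝ) (t r : ℝ) : ℝ :=
  u (t - Real.log (Real.cosh r)) (Real.tanh r)

lemma my_tanh_mem (r : ℝ) : Real.tanh r ∈ Ioo (-1:ℝ) 1 := by
  have hc : 0 < Real.cosh r := Real.cosh_pos r
  have h2 : Real.cosh r - Real.sinh r = Real.exp (-r) := Real.cosh_sub_sinh r
  have h3 : Real.cosh r + Real.sinh r = Real.exp r := Real.cosh_add_sinh r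
  have e1 := Real.exp_pos (-r)
  have e2 := Real.exp_pos r
  rw [Real.tanh_eq_sinh_div_cosh]
  constructor
  · rw [lt_div_iff₀ hc]; linarith
  · rw [div_lt_one hc]; linarith

lemma my_hasDerivAt_tanh (r : ℝ) :
    HasDerivAt Real.tanh (1 - Real.tanh r ^ 2) r := by
  have hc : Real.cosh r ≠ 0 := (Real.cosh_pos r).ne'
  have h := (Real.hasDerivAt_sinh r).div (Real.hasDerivAt_cosh r) hc
  have hfun : (Real.sinh / Real.cosh) = Real.tanh :=
    funext fun x => (Real.tanh_eq_sinh_div_cosh x).symm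
  rw [hfun] at h
  refine h.congr_deriv ?_
  rw [Real.tanh_eq_sinh_div_cosh]
  have h1 := Real.cosh_sq_sub_sinh_sq r
  field_simp

lemma my_hasDerivAt_logcosh (r : ℝ) :
    HasDerivAt (fun x => Real.log (Real.cosh x)) (Real.tanh r) r := by
  have hc : Real.cosh r ≠ 0 := (Real.cosh_pos r).ne'
  have h := (Real.hasDerivAt_cosh r).log hc
  rw [Real.tanh_eq_sinh_div_cosh]
  exact h

lemma clm_comp_curve {G : ℝ×ℝ → ((ℝ×ℝ) →L[ℝ] ℝ)} {G' : (ℝ×ℝ) →L[ℝ] ((ℝ×ℝ) →L[ℝ] ℝ)}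
    {γ : ℝ → ℝ×ℝ} {γ' : ℝ×ℝ} {x : ℝ} (v : ℝ×ℝ)
    (hγ : HasDerivAt γ γ' x) (hG : HasFDerivAt G G' (γ x)) :
    HasDerivAt (fun x' => G (γ x') v) (G' γ' v) x := by
  have h := ((ContinuousLinearMap.apply ℝ ℝ v).hasFDerivAt.comp (γ x) hG).comp_hasDerivAt x hγ
  exact h

lemma clm_expand (L : ℝ×ℝ →L[ℝ] ℝ) (a b : ℝ) :
    L (a, b) = a * L (1,0) + b * L (0,1) := by
  have h : ((a,b) : ℝ×ℝ) = a • ((1:ℝ),(0:ℝ)) + b • ((0:ℝ),(1:ℝ)) := by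
    simp [Prod.ext_iff]
  rw [h, map_add, _root_.map_smul, _root_.map_smul, smul_eq_mul, smul_eq_mul]

lemma clm2_expand (L : (ℝ×ℝ) →L[ℝ] ((ℝ×ℝ) →L[ℝ] ℝ)) (a b : ℝ) (w : ℝ×ℝ) :
    L (a, b) w = a * L (1,0) w + b * L (0,1) w := by
  have h : ((a,b) : ℝ×ℝ) = a • ((1:ℝ),(0:ℝ)) + b • ((0:ℝ),(1:ℝ)) := by
    simp [Prod.ext_iff]
  rw [h, map_add, _root_.map_smul, _root_.map_smul]
  simp [smul_eq_mul]

lemma key (u : ℝ → ℝ → ℝ)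
    (hu : ContDiffOn ℝ (⊤:ℕ∞) (fun p : ℝ × ℝ => u p.1 p.2) (univ ×ˢ Ioo (-1:ℝ) 1))
    (t r : ℝ) :
    dS (dS (hypCoord u)) t r - dY (dY (hypCoord u)) t r
      = (1 - Real.tanh r ^ 2) * waveOp u (t - Real.log (Real.cosh r)) (Real.tanh r) := by
  set F : ℝ × ℝ → ℝ := fun p => u p.1 p.2 with hFdef
  set Ω : Set (ℝ × ℝ) := univ ×ˢ Ioo (-1:ℝ) 1 with hΩdef
  have hΩ : IsOpen Ω := isOpen_univ.prod isOpen_Ioo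
  have hmem : ∀ a b : ℝ, b ∈ Ioo (-1:ℝ) 1 → ((a, b) : ℝ×ℝ) ∈ Ω := fun a b hb => ⟨mem_univ a, hb⟩
  have hFd : ∀ p ∈ Ω, HasFDerivAt F (fderiv ℝ F p) p := fun p hp =>
    ((hu.contDiffAt (hΩ.mem_nhds hp)).differentiableAt (by simp)).hasFDerivAt
  have hf'cd : ContDiffOn ℝ (⊤:ℕ∞) (fderiv ℝ F) Ω := hu.fderiv_of_isOpen hΩ (by simp)
  have hf'd : ∀ p ∈ Ω, HasFDerivAt (fderiv ℝ F) (fderiv ℝ (fderiv ℝ F) p) p := fun p hp =>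
    ((hf'cd.contDiffAt (hΩ.mem_nhds hp)).differentiableAt (by simp)).hasFDerivAt
  set c := Real.log (Real.cosh r) with hc0
  set y := Real.tanh r with hy0
  set s := t - c with hs0
  set p : ℝ × ℝ := (s, y) with hp0
  have hyI : y ∈ Ioo (-1:ℝ) 1 := my_tanh_mem r
  have hpΩ : p ∈ Ω := hmem s y hyI
  -- first derivatives of W
  have hdSW : ∀ t' : ℝ, dS (hypCoord u) t' r = fderiv ℝ F (t' - c, y) ((1:ℝ),(0:ℝ)) := by
    intro t'
    have hq : ((t' - c, y) : ℝ×ℝ) ∈ Ω := hmem _ _ hyI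
    have hγ : HasDerivAt (fun x : ℝ => ((x - c, y) : ℝ×ℝ)) ((1:ℝ),(0:ℝ)) t' :=
      HasDerivAt.prodMk ((hasDerivAt_id t').sub_const c) (hasDerivAt_const t' y)
    exact ((hFd _ hq).comp_hasDerivAt t' hγ).deriv
  have hdYW : ∀ r' : ℝ, dY (hypCoord u) t r' =
      -Real.tanh r' * fderiv ℝ F (t - Real.log (Real.cosh r'), Real.tanh r') ((1:ℝ),(0:ℝ))
      + (1 - Real.tanh r' ^ 2) *
          fderiv ℝ F (t - Real.log (Real.cosh r'), Real.tanh r') ((0:ℝ),(1:ℝ)) := by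
    intro r'
    have hq : ((t - Real.log (Real.cosh r'), Real.tanh r') : ℝ×ℝ) ∈ Ω :=
      hmem _ _ (my_tanh_mem r')
    have hψ : HasDerivAt (fun x : ℝ => ((t - Real.log (Real.cosh x), Real.tanh x) : ℝ×ℝ))
        (-Real.tanh r', 1 - Real.tanh r' ^ 2) r' :=
      HasDerivAt.prodMk ((my_hasDerivAt_logcosh r').const_sub t) (my_hasDerivAt_tanh r')
    have h' : HasDerivAt (fun x : ℝ => hypCoord u t x)
        (fderiv ℝ F (t - Real.log (Real.cosh r'), Real.tanh r')
          (-Real.tanh r', 1 - Real.tanh r' ^ 2)) r' :=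
      by have := (hFd _ hq).comp_hasDerivAt r' hψ; exact this
    show deriv (fun x : ℝ => hypCoord u t x) r' = _
    rw [h'.deriv]
    exact clm_expand _ _ _
  -- second derivatives of W
  have hdSdSW : dS (dS (hypCoord u)) t r
      = fderiv ℝ (fderiv ℝ F) p ((1:ℝ),(0:ℝ)) ((1:ℝ),(0:ℝ)) := by
    show deriv (fun t' => dS (hypCoord u) t' r) t = _
    rw [funext hdSW]
    have hγ : HasDerivAt (fun x : ℝ => ((x - c, y) : ℝ×ℝ)) ((1:ℝ),(0:ℝ)) t :=
      HasDerivAt.prodMk ((hasDerivAt_id t).sub_const c) (hasDerivAt_const t y)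
    exact (clm_comp_curve ((1:ℝ),(0:ℝ)) hγ (hf'd p hpΩ)).deriv
  have hψr : HasDerivAt (fun x : ℝ => ((t - Real.log (Real.cosh x), Real.tanh x) : ℝ×ℝ))
      (-y, 1 - y ^ 2) r :=
    HasDerivAt.prodMk ((my_hasDerivAt_logcosh r).const_sub t) (my_hasDerivAt_tanh r)
  have hg1c : HasDerivAt
      (fun x : ℝ => fderiv ℝ F (t - Real.log (Real.cosh x), Real.tanh x) ((1:ℝ),(0:ℝ)))
      (fderiv ℝ (fderiv ℝ F) p (-y, 1 - y ^ 2) ((1:ℝ),(0:ℝ))) r :=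
    clm_comp_curve ((1:ℝ),(0:ℝ)) hψr (hf'd p hpΩ)
  have hg2c : HasDerivAt
      (fun x : ℝ => fderiv ℝ F (t - Real.log (Real.cosh x), Real.tanh x) ((0:ℝ),(1:ℝ)))
      (fderiv ℝ (fderiv ℝ F) p (-y, 1 - y ^ 2) ((0:ℝ),(1:ℝ))) r :=
    clm_comp_curve ((0:ℝ),(1:ℝ)) hψr (hf'd p hpΩ)
  have hsq : HasDerivAt (fun x : ℝ => 1 - Real.tanh x ^ 2) (-(2 * y * (1 - y ^ 2))) r := by
    have h := ((my_hasDerivAt_tanh r).pow 2).const_sub 1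
    refine h.congr_deriv ?_
    rw [hy0]
    norm_num
  have hterm1 : HasDerivAt
      (fun x : ℝ => -Real.tanh x *
        fderiv ℝ F (t - Real.log (Real.cosh x), Real.tanh x) ((1:ℝ),(0:ℝ)))
      (-(1 - y ^ 2) * fderiv ℝ F p ((1:ℝ),(0:ℝ))
        + -y * fderiv ℝ (fderiv ℝ F) p (-y, 1 - y ^ 2) ((1:ℝ),(0:ℝ))) r :=
    (my_hasDerivAt_tanh r).neg.mul hg1c
  have hterm2 : HasDerivAt
      (fun x : ℝ => (1 - Real.tanh x ^ 2) *
        fderiv ℝ F (t - Real.log (Real.cosh x), Real.tanh x) ((0:ℝ),(1:ℝ)))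
      (-(2 * y * (1 - y ^ 2)) * fderiv ℝ F p ((0:ℝ),(1:ℝ))
        + (1 - y ^ 2) * fderiv ℝ (fderiv ℝ F) p (-y, 1 - y ^ 2) ((0:ℝ),(1:ℝ))) r :=
    hsq.mul hg2c
  have hsum := hterm1.add hterm2
  have hdYdYW : dY (dY (hypCoord u)) t r =
      (-(1 - y ^ 2) * fderiv ℝ F p ((1:ℝ),(0:ℝ))
        + -y * fderiv ℝ (fderiv ℝ F) p (-y, 1 - y ^ 2) ((1:ℝ),(0:ℝ)))
      + (-(2 * y * (1 - y ^ 2)) * fderiv ℝ F p ((0:ℝ),(1:ℝ))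
        + (1 - y ^ 2) * fderiv ℝ (fderiv ℝ F) p (-y, 1 - y ^ 2) ((0:ℝ),(1:ℝ))) := by
    show deriv (fun x : ℝ => dY (hypCoord u) t x) r = _
    rw [funext hdYW]
    exact hsum.deriv
  -- derivatives of u at p
  have hdSu' : ∀ a : ℝ, dS u a y = fderiv ℝ F (a, y) ((1:ℝ),(0:ℝ)) := by
    intro a
    have hγ : HasDerivAt (fun x : ℝ => ((x, y) : ℝ×ℝ)) ((1:ℝ),(0:ℝ)) a :=
      HasDerivAt.prodMk (hasDerivAt_id a) (hasDerivAt_const a y)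
    exact ((hFd _ (hmem a y hyI)).comp_hasDerivAt a hγ).deriv
  have hdYu' : ∀ a : ℝ, ∀ b ∈ Ioo (-1:ℝ) 1, dY u a b = fderiv ℝ F (a, b) ((0:ℝ),(1:ℝ)) := by
    intro a b hb
    have hγ : HasDerivAt (fun x : ℝ => ((a, x) : ℝ×ℝ)) ((0:ℝ),(1:ℝ)) b :=
      HasDerivAt.prodMk (hasDerivAt_const b a) (hasDerivAt_id b)
    exact ((hFd _ (hmem a b hb)).comp_hasDerivAt b hγ).deriv
  have hγs : HasDerivAt (fun x : ℝ => ((x, y) : ℝ×ℝ)) ((1:ℝ),(0:ℝ)) s :=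
    HasDerivAt.prodMk (hasDerivAt_id s) (hasDerivAt_const s y)
  have hγy : HasDerivAt (fun x : ℝ => ((s, x) : ℝ×ℝ)) ((0:ℝ),(1:ℝ)) y :=
    HasDerivAt.prodMk (hasDerivAt_const y s) (hasDerivAt_id y)
  have hdSu : dS u s y = fderiv ℝ F p ((1:ℝ),(0:ℝ)) := hdSu' s
  have hdYu : dY u s y = fderiv ℝ F p ((0:ℝ),(1:ℝ)) := hdYu' s y hyI
  have hdSdSu : dS (dS u) s y = fderiv ℝ (fderiv ℝ F) p ((1:ℝ),(0:ℝ)) ((1:ℝ),(0:ℝ)) := by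
    show deriv (fun a => dS u a y) s = _
    rw [funext hdSu']
    exact (clm_comp_curve ((1:ℝ),(0:ℝ)) hγs (hf'd p hpΩ)).deriv
  have hdSdYu : dS (dY u) s y = fderiv ℝ (fderiv ℝ F) p ((1:ℝ),(0:ℝ)) ((0:ℝ),(1:ℝ)) := by
    show deriv (fun a => dY u a y) s = _
    have hfe : (fun a => dY u a y) = fun a => fderiv ℝ F (a, y) ((0:ℝ),(1:ℝ)) :=
      funext fun a => hdYu' a y hyI
    rw [hfe]
    exact (clm_comp_curve ((0:ℝ),(1:ℝ)) hγs (hf'd p hpΩ)).deriv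
  have hdYdYu : dY (dY u) s y = fderiv ℝ (fderiv ℝ F) p ((0:ℝ),(1:ℝ)) ((0:ℝ),(1:ℝ)) := by
    show deriv (fun b => dY u s b) y = _
    have hev : (fun b => dY u s b) =ᶠ[nhds y] fun b => fderiv ℝ F (s, b) ((0:ℝ),(1:ℝ)) := by
      filter_upwards [isOpen_Ioo.mem_nhds hyI] with b hb using hdYu' s b hb
    rw [hev.deriv_eq]
    exact (clm_comp_curve ((0:ℝ),(1:ℝ)) hγy (hf'd p hpΩ)).deriv
  -- symmetry of second derivatives
  have hsymm : fderiv ℝ (fderiv ℝ F) p ((0:ℝ),(1:ℝ)) ((1:ℝ),(0:ℝ))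
      = fderiv ℝ (fderiv ℝ F) p ((1:ℝ),(0:ℝ)) ((0:ℝ),(1:ℝ)) := by
    have hev : ∀ᶠ q in nhds p, HasFDerivAt F (fderiv ℝ F q) q := by
      filter_upwards [hΩ.mem_nhds hpΩ] with q hq using hFd q hq
    exact second_derivative_symmetric_of_eventually hev (hf'd p hpΩ) _ _
  -- assemble
  rw [hdSdSW, hdYdYW]
  simp only [waveOp]
  rw [hdSdSu, hdSdYu, hdYdYu, hdSu, hdYu]
  rw [clm2_expand (fderiv ℝ (fderiv ℝ F) p) (-y) (1 - y ^ 2) ((1:ℝ),(0:ℝ)),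
      clm2_expand (fderiv ℝ (fderiv ℝ F) p) (-y) (1 - y ^ 2) ((0:ℝ),(1:ℝ)),
      hsymm]
  ring

lemma my_tanh_surj {y : ℝ} (hy : y ∈ Ioo (-1:ℝ) 1) : ∃ r, Real.tanh r = y := by
  obtain ⟨h1, h2⟩ := hy
  have hA : (0:ℝ) < (1+y)/(1-y) := div_pos (by linarith) (by linarith)
  refine ⟨Real.log ((1+y)/(1-y)) / 2, ?_⟩
  set r := Real.log ((1+y)/(1-y)) / 2 with hr
  have hE : Real.exp r * Real.exp r = (1+y)/(1-y) := by
    rw [← Real.exp_add]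
    have h : r + r = Real.log ((1+y)/(1-y)) := by rw [hr]; ring
    rw [h, Real.exp_log hA]
  have hEpos := Real.exp_pos r
  have h1y : (1:ℝ) - y ≠ 0 := by linarith
  rw [Real.tanh_eq_sinh_div_cosh, Real.sinh_eq, Real.cosh_eq, Real.exp_neg]
  rw [div_div_div_cancel_right₀]
  · have hE' : Real.exp r * Real.exp r * (1-y) = 1+y := by
      field_simp at hE; linarith [hE]
    field_simp
    linear_combination hE'
  · norm_num

/-- Equivalence of the reduced Yang–Mills equation on the wormhole with its hyperboloidal
formulation: for smooth `u` on `ℝ×(-1,1)` and `W(t,r) := u(t − log cosh r, tanh r)`,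
`∂_t²W − ∂_r²W = W(1−W²)/cosh(r)²` on `ℝ²` iff
`[∂_s² + 2y∂_s∂_y + ∂_s − (1−y²)∂_y² + 2y∂_y − 1]u = −u³` on `ℝ×(-1,1)`. -/
theorem stmt8 (u : ℝ → ℝ → ℝ)
    (hu : ContDiffOn ℝ (⊤:ℕ∞) (fun p : ℝ × ℝ => u p.1 p.2) (univ ×ˢ Ioo (-1:ℝ) 1)) :
    (∀ t r : ℝ, dS (dS (hypCoord u)) t r - dY (dY (hypCoord u)) t r
        = hypCoord u t r * (1 - (hypCoord u t r)^2) / (Real.cosh r)^2) ↔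
    (∀ s : ℝ, ∀ y ∈ Ioo (-1:ℝ) 1, waveOp u s y - u s y = -(u s y)^3) := by
  constructor
  · intro h s y hy
    obtain ⟨r, hr⟩ := my_tanh_surj hy
    have hk := key u hu (s + Real.log (Real.cosh r)) r
    rw [add_sub_cancel_right, hr] at hk
    have heq := h (s + Real.log (Real.cosh r)) r
    rw [hk] at heq
    have hW : hypCoord u (s + Real.log (Real.cosh r)) r = u s y := by
      simp only [hypCoord]; rw [add_sub_cancel_right, hr]
    rw [hW] at heq
    have hc2 : ((Real.cosh r)^2) ≠ 0 := pow_ne_zero 2 (Real.cosh_pos r).ne'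
    have hsech : (1 - y^2) * Real.cosh r ^ 2 = 1 := by
      rw [← hr, Real.tanh_eq_sinh_div_cosh]
      have h1 := Real.cosh_sq_sub_sinh_sq r
      field_simp
      linarith [h1]
    have hmain : waveOp u s y = u s y - (u s y)^3 := by
      field_simp at heq
      linear_combination heq - waveOp u s y * hsech
    linarith [hmain]
  · intro h t r
    have hk := key u hu t r
    rw [hk]
    have hyI := my_tanh_mem r
    have hw := h (t - Real.log (Real.cosh r)) (Real.tanh r) hyI
    have hW : hypCoord u t r = u (t - Real.log (Real.cosh r)) (Real.tanh r) := rfl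
    rw [hW]
    have hwave : waveOp u (t - Real.log (Real.cosh r)) (Real.tanh r)
        = u (t - Real.log (Real.cosh r)) (Real.tanh r)
          - (u (t - Real.log (Real.cosh r)) (Real.tanh r))^3 := by linarith [hw]
    rw [hwave]
    have hc2 : ((Real.cosh r)^2) ≠ 0 := pow_ne_zero 2 (Real.cosh_pos r).ne'
    have hsech : (1 - Real.tanh r^2) * Real.cosh r ^ 2 = 1 := by
      rw [Real.tanh_eq_sinh_div_cosh]
      have h1 := Real.cosh_sq_sub_sinh_sq r
      field_simp
      linarith [h1]
    rw [eq_div_iff hc2]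
    linear_combination (u (t - Real.log (Real.cosh r)) (Real.tanh r)
      - (u (t - Real.log (Real.cosh r)) (Real.tanh r))^3) * hsech
end

section
/- Let u ∈ C²([0,∞)×[−1,1]) be real-valued and satisfy [∂_s² + 2y ∂_s∂_y + ∂_s − (1−y²)∂_y² + 2y ∂_y] u(s,y) = 0 for all (s,y) ∈ (0,∞)×(−1,1). Then for every s > 0 the energy E(s) := (1/2)[∫_{−1}^{1}(1−y²)(∂_y u(s,y))² dy + ∫_{−1}^{1}(∂_s u(s,y))² dy] is differentiable and E'(s) = −(∂_s u(s,−1))² − (∂_s u(s,1))². -/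
open MeasureTheory Set ENNReal Topology

/-- The energy `E(s) = (1/2)[∫_{-1}^1 (1-y²)(∂_y u)² dy + ∫_{-1}^1 (∂_s u)² dy]`. -/
noncomputable def energyFun (u : ℝ → ℝ → ℝ) (s : ℝ) : ℝ :=
  (1/2) * ((∫ y in (-1:ℝ)..1, (1 - y^2) * (dY u s y)^2) + ∫ y in (-1:ℝ)..1, (dS u s y)^2)

namespace Stmt9Aux

/-- The closed domain. -/
def SS : Set (ℝ × ℝ) := Ici (0:ℝ) ×ˢ Icc (-1:ℝ) 1

/-- First-order derivative data on the closed domain. -/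
noncomputable def D1 (u : ℝ → ℝ → ℝ) : ℝ × ℝ → (ℝ × ℝ) →L[ℝ] ℝ :=
  fderivWithin ℝ (fun p : ℝ × ℝ => u p.1 p.2) SS

/-- Second-order derivative data on the closed domain. -/
noncomputable def D2 (u : ℝ → ℝ → ℝ) : ℝ × ℝ → (ℝ × ℝ) →L[ℝ] (ℝ × ℝ) →L[ℝ] ℝ :=
  fderivWithin ℝ (D1 u) SS

noncomputable def P1 (u : ℝ → ℝ → ℝ) (s y : ℝ) : ℝ := D1 u (s, y) (1, 0)
noncomputable def P2 (u : ℝ → ℝ → ℝ) (s y : ℝ) : ℝ := D1 u (s, y) (0, 1)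
noncomputable def Q11 (u : ℝ → ℝ → ℝ) (s y : ℝ) : ℝ := D2 u (s, y) (1, 0) (1, 0)
noncomputable def Q12 (u : ℝ → ℝ → ℝ) (s y : ℝ) : ℝ := D2 u (s, y) (1, 0) (0, 1)
noncomputable def Q21 (u : ℝ → ℝ → ℝ) (s y : ℝ) : ℝ := D2 u (s, y) (0, 1) (1, 0)
noncomputable def Q22 (u : ℝ → ℝ → ℝ) (s y : ℝ) : ℝ := D2 u (s, y) (0, 1) (0, 1)

lemma uniqueDiffOn_SS : UniqueDiffOn ℝ SS :=
  (uniqueDiffOn_Ici 0).prod (uniqueDiffOn_Icc (by norm_num))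

lemma interior_SS : interior SS = Ioi (0:ℝ) ×ˢ Ioo (-1:ℝ) 1 := by
  rw [SS, interior_prod_eq, interior_Ici, interior_Icc]

lemma mem_SS {s y : ℝ} (hs : 0 < s) (hy : y ∈ Icc (-1:ℝ) 1) : (s, y) ∈ SS :=
  ⟨le_of_lt hs, hy⟩

lemma SS_mem_nhds {s y : ℝ} (hs : 0 < s) (hy : y ∈ Ioo (-1:ℝ) 1) : SS ∈ 𝓝 (s, y) := by
  rw [mem_nhds_iff]
  exact ⟨interior SS, interior_subset, isOpen_interior, by rw [interior_SS]; exact ⟨hs, hy⟩⟩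

section

variable {u : ℝ → ℝ → ℝ}
  (hu : ContDiffOn ℝ 2 (fun p : ℝ × ℝ => u p.1 p.2) (Ici (0:ℝ) ×ˢ Icc (-1:ℝ) 1))

include hu

lemma hu' : ContDiffOn ℝ 2 (fun p : ℝ × ℝ => u p.1 p.2) SS := hu

lemma contDiffOn_D1 : ContDiffOn ℝ 1 (D1 u) SS :=
  (hu' hu).fderivWithin uniqueDiffOn_SS (by norm_num)

lemma continuousOn_D1 : ContinuousOn (D1 u) SS := (contDiffOn_D1 hu).continuousOn

lemma continuousOn_D2 : ContinuousOn (D2 u) SS := by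
  have h : ContDiffOn ℝ 0 (D2 u) SS :=
    (contDiffOn_D1 hu).fderivWithin uniqueDiffOn_SS (by norm_num)
  exact h.continuousOn

lemma hasFDerivWithinAt_D1 {s y : ℝ} (h : (s, y) ∈ SS) :
    HasFDerivWithinAt (fun p : ℝ × ℝ => u p.1 p.2) (D1 u (s, y)) SS (s, y) :=
  (((hu' hu).differentiableOn (by norm_num)) _ h).hasFDerivWithinAt

lemma hasFDerivWithinAt_D2 {s y : ℝ} (h : (s, y) ∈ SS) :
    HasFDerivWithinAt (D1 u) (D2 u (s, y)) SS (s, y) :=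
  (((contDiffOn_D1 hu).differentiableOn one_ne_zero) _ h).hasFDerivWithinAt

/-- ∂ₛ of `u`: equals `P1` for `s > 0`, all `y ∈ [-1,1]`. -/
lemma hasDerivAt_slice_s {s y : ℝ} (hs : 0 < s) (hy : y ∈ Icc (-1:ℝ) 1) :
    HasDerivAt (fun s' => u s' y) (P1 u s y) s := by
  have hγ : HasDerivWithinAt (fun s' : ℝ => (s', y)) ((1:ℝ), (0:ℝ)) (Ici 0) s :=
    ((hasDerivAt_id s).prodMk (hasDerivAt_const s y)).hasDerivWithinAt
  have hmap : MapsTo (fun s' : ℝ => ((s' : ℝ), y)) (Ici 0) SS := fun s' hs' => ⟨hs', hy⟩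
  have := (hasFDerivWithinAt_D1 hu (mem_SS hs hy)).comp_hasDerivWithinAt s hγ hmap
  exact this.hasDerivAt (Ici_mem_nhds hs)

lemma dS_eq {s y : ℝ} (hs : 0 < s) (hy : y ∈ Icc (-1:ℝ) 1) :
    dS u s y = P1 u s y := (hasDerivAt_slice_s hu hs hy).deriv

/-- ∂_y of `u`: equals `P2` for `s ≥ 0`, `y ∈ (-1,1)`. -/
lemma hasDerivAt_slice_y {s y : ℝ} (hs : 0 ≤ s) (hy : y ∈ Ioo (-1:ℝ) 1) :
    HasDerivAt (fun y' => u s y') (P2 u s y) y := by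
  have hγ : HasDerivWithinAt (fun y' : ℝ => (s, y')) ((0:ℝ), (1:ℝ)) (Icc (-1) 1) y :=
    ((hasDerivAt_const y s).prodMk (hasDerivAt_id y)).hasDerivWithinAt
  have hmap : MapsTo (fun y' : ℝ => (s, y')) (Icc (-1) 1) SS := fun y' hy' => ⟨hs, hy'⟩
  have := (hasFDerivWithinAt_D1 hu ⟨hs, le_of_lt hy.1, le_of_lt hy.2⟩).comp_hasDerivWithinAt
    y hγ hmap
  exact this.hasDerivAt (Icc_mem_nhds hy.1 hy.2)

lemma dY_eq {s y : ℝ} (hs : 0 ≤ s) (hy : y ∈ Ioo (-1:ℝ) 1) :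
    dY u s y = P2 u s y := (hasDerivAt_slice_y hu hs hy).deriv

/-- s-derivatives of the first-order data, valid up to the lateral boundary. -/
lemma hasDerivAt_D1_s {s y : ℝ} (hs : 0 < s) (hy : y ∈ Icc (-1:ℝ) 1) (v : ℝ × ℝ) :
    HasDerivAt (fun s' => D1 u (s', y) v) (D2 u (s, y) (1, 0) v) s := by
  have hγ : HasDerivWithinAt (fun s' : ℝ => (s', y)) ((1:ℝ), (0:ℝ)) (Ici 0) s :=
    ((hasDerivAt_id s).prodMk (hasDerivAt_const s y)).hasDerivWithinAt
  have hmap : MapsTo (fun s' : ℝ => ((s' : ℝ), y)) (Ici 0) SS := fun s' hs' => ⟨hs', hy⟩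
  have h1 : HasDerivWithinAt (fun s' : ℝ => D1 u (s', y)) (D2 u (s, y) (1, 0)) (Ici 0) s :=
    (hasFDerivWithinAt_D2 hu (mem_SS hs hy)).comp_hasDerivWithinAt s hγ hmap
  have h2 : HasDerivAt (fun s' : ℝ => D1 u (s', y)) (D2 u (s, y) (1, 0)) s :=
    h1.hasDerivAt (Ici_mem_nhds hs)
  have := h2.clm_apply (hasDerivAt_const s v)
  simpa using this

/-- y-derivatives of the first-order data, valid for interior `y`. -/
lemma hasDerivAt_D1_y {s y : ℝ} (hs : 0 ≤ s) (hy : y ∈ Ioo (-1:ℝ) 1) (v : ℝ × ℝ) :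
    HasDerivAt (fun y' => D1 u (s, y') v) (D2 u (s, y) (0, 1) v) y := by
  have hγ : HasDerivWithinAt (fun y' : ℝ => (s, y')) ((0:ℝ), (1:ℝ)) (Icc (-1) 1) y :=
    ((hasDerivAt_const y s).prodMk (hasDerivAt_id y)).hasDerivWithinAt
  have hmap : MapsTo (fun y' : ℝ => (s, y')) (Icc (-1) 1) SS := fun y' hy' => ⟨hs, hy'⟩
  have h1 : HasDerivWithinAt (fun y' : ℝ => D1 u (s, y')) (D2 u (s, y) (0, 1)) (Icc (-1) 1) y :=
    (hasFDerivWithinAt_D2 hu ⟨hs, le_of_lt hy.1, le_of_lt hy.2⟩).comp_hasDerivWithinAt y hγ hmap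
  have h2 : HasDerivAt (fun y' : ℝ => D1 u (s, y')) (D2 u (s, y) (0, 1)) y :=
    h1.hasDerivAt (Icc_mem_nhds hy.1 hy.2)
  have := h2.clm_apply (hasDerivAt_const y v)
  simpa using this

/-- Clairaut symmetry at interior points. -/
lemma symm_Q {s y : ℝ} (hs : 0 < s) (hy : y ∈ Ioo (-1:ℝ) 1) :
    Q12 u s y = Q21 u s y := by
  have hnhds : SS ∈ 𝓝 (s, y) := SS_mem_nhds hs hy
  have hev : ∀ᶠ p in 𝓝 (s, y), HasFDerivAt (fun p : ℝ × ℝ => u p.1 p.2) (D1 u p) p := by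
    filter_upwards [isOpen_interior.mem_nhds (by rw [interior_SS]; exact ⟨hs, hy⟩)] with p hp
    have hp' : SS ∈ 𝓝 p := mem_nhds_iff.2 ⟨interior SS, interior_subset, isOpen_interior, hp⟩
    have hd : DifferentiableWithinAt ℝ (fun p : ℝ × ℝ => u p.1 p.2) SS p :=
      ((hu' hu).differentiableOn (by norm_num)) _ (interior_subset hp)
    have := (hd.differentiableAt hp').hasFDerivAt
    rwa [show fderiv ℝ (fun p : ℝ × ℝ => u p.1 p.2) p = D1 u p from
      (fderivWithin_of_mem_nhds hp').symm] at this
  have hx : HasFDerivAt (D1 u) (D2 u (s, y)) (s, y) :=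
    (hasFDerivWithinAt_D2 hu (mem_SS hs ⟨le_of_lt hy.1, le_of_lt hy.2⟩)).hasFDerivAt hnhds
  exact second_derivative_symmetric_of_eventually hev hx _ _

/-- Second partials expressed through `D2`, at interior points. -/
lemma dS_dS_eq {s y : ℝ} (hs : 0 < s) (hy : y ∈ Icc (-1:ℝ) 1) :
    dS (dS u) s y = Q11 u s y := by
  have hev : (fun s' => dS u s' y) =ᶠ[𝓝 s] (fun s' => P1 u s' y) := by
    filter_upwards [Ioi_mem_nhds hs] with s' hs'
    exact dS_eq hu hs' hy
  have : deriv (fun s' => dS u s' y) s = deriv (fun s' => P1 u s' y) s := hev.deriv_eq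
  rw [dS, this]
  exact (hasDerivAt_D1_s hu hs hy (1, 0)).deriv

lemma dS_dY_eq {s y : ℝ} (hs : 0 < s) (hy : y ∈ Ioo (-1:ℝ) 1) :
    dS (dY u) s y = Q12 u s y := by
  have hev : (fun s' => dY u s' y) =ᶠ[𝓝 s] (fun s' => P2 u s' y) := by
    filter_upwards [Ioi_mem_nhds hs] with s' hs'
    exact dY_eq hu (le_of_lt hs') hy
  have : deriv (fun s' => dY u s' y) s = deriv (fun s' => P2 u s' y) s := hev.deriv_eq
  rw [dS, this]
  exact (hasDerivAt_D1_s hu hs ⟨le_of_lt hy.1, le_of_lt hy.2⟩ (0, 1)).deriv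

lemma dY_dY_eq {s y : ℝ} (hs : 0 < s) (hy : y ∈ Ioo (-1:ℝ) 1) :
    dY (dY u) s y = Q22 u s y := by
  have hev : (fun y' => dY u s y') =ᶠ[𝓝 y] (fun y' => P2 u s y') := by
    filter_upwards [Ioo_mem_nhds hy.1 hy.2] with y' hy'
    exact dY_eq hu (le_of_lt hs) hy'
  have : deriv (fun y' => dY u s y') y = deriv (fun y' => P2 u s y') y := hev.deriv_eq
  rw [dY, this]
  exact (hasDerivAt_D1_y hu (le_of_lt hs) hy (0, 1)).deriv

/-- The derivative-under-the-integral integrand, as a function on the plane. -/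
noncomputable def Bfun (u : ℝ → ℝ → ℝ) : ℝ × ℝ → ℝ := fun p =>
  2 * (1 - p.2^2) * (D1 u p (0, 1)) * (D2 u p (1, 0) (0, 1))
    + 2 * (D1 u p (1, 0)) * (D2 u p (1, 0) (1, 0))

lemma continuousOn_D1_apply (v : ℝ × ℝ) : ContinuousOn (fun p => D1 u p v) SS :=
  (ContinuousLinearMap.apply ℝ ℝ v).continuous.comp_continuousOn (continuousOn_D1 hu)

lemma continuousOn_D2_apply (v w : ℝ × ℝ) : ContinuousOn (fun p => D2 u p v w) SS :=
  (ContinuousLinearMap.apply ℝ ℝ w).continuous.comp_continuousOn <|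
    (ContinuousLinearMap.apply ℝ ((ℝ × ℝ) →L[ℝ] ℝ) v).continuous.comp_continuousOn
      (continuousOn_D2 hu)

lemma continuousOn_Bfun : ContinuousOn (Bfun u) SS := by
  have hy2 : ContinuousOn (fun p : ℝ × ℝ => 2 * (1 - p.2^2)) SS :=
    (continuous_const.mul (continuous_const.sub (continuous_snd.pow 2))).continuousOn
  exact ((hy2.mul (continuousOn_D1_apply hu _)).mul (continuousOn_D2_apply hu _ _)).add
    ((continuousOn_const.mul (continuousOn_D1_apply hu _)).mul (continuousOn_D2_apply hu _ _))

/-- The PDE written in terms of the canonical derivative data. -/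
lemma pde_Q (heq : ∀ s ∈ Ioi (0:ℝ), ∀ y ∈ Ioo (-1:ℝ) 1, waveOp u s y = 0)
    {s y : ℝ} (hs : 0 < s) (hy : y ∈ Ioo (-1:ℝ) 1) :
    Q11 u s y = -(2*y) * Q12 u s y - P1 u s y + (1 - y^2) * Q22 u s y
      - 2 * y * P2 u s y := by
  have hyIcc : y ∈ Icc (-1:ℝ) 1 := ⟨le_of_lt hy.1, le_of_lt hy.2⟩
  have h := heq s hs y hy
  rw [waveOp, dS_dS_eq hu hs hyIcc, dS_dY_eq hu hs hy, dS_eq hu hs hyIcc,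
    dY_dY_eq hu hs hy, dY_eq hu (le_of_lt hs) hy] at h
  linarith

end

end Stmt9Aux

/-- Energy identity (Eq. `eq:enid`): for a real-valued `C²` solution of the hyperboloidal
free wave equation on `[0,∞)×[-1,1]`, the energy is differentiable for `s > 0` with
`E'(s) = −(∂_s u(s,−1))² − (∂_s u(s,1))²`. -/
theorem stmt9 (u : ℝ → ℝ → ℝ)
    (hu : ContDiffOn ℝ 2 (fun p : ℝ × ℝ => u p.1 p.2) (Ici (0:ℝ) ×ˢ Icc (-1:ℝ) 1))
    (heq : ∀ s ∈ Ioi (0:ℝ), ∀ y ∈ Ioo (-1:ℝ) 1, waveOp u s y = 0) :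
    ∀ s ∈ Ioi (0:ℝ),
      HasDerivAt (energyFun u) (-(dS u s (-1))^2 - (dS u s 1)^2) s := by
  classical
  intro s hs
  have hs0 : 0 < s := hs
  open Stmt9Aux in
  -- bound on the derivative integrand on a compact neighborhood
  set ε : ℝ := s / 2 with hεdef
  have hε : 0 < ε := by positivity
  set K : Set (ℝ × ℝ) := Icc (s - ε) (s + ε) ×ˢ Icc (-1:ℝ) 1 with hKdef
  have hKS : K ⊆ SS := by
    rintro ⟨t, y⟩ ⟨ht, hy⟩
    exact ⟨by simp only [mem_Ici]; have := ht.1; simp only [hεdef] at this ⊢; linarith, hy⟩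
  have hK : IsCompact K := isCompact_Icc.prod isCompact_Icc
  obtain ⟨C, hC⟩ : ∃ C, ∀ p ∈ K, ‖Bfun u p‖ ≤ C :=
    hK.exists_bound_of_continuousOn ((continuousOn_Bfun hu).mono hKS)
  have hball : ∀ t ∈ Metric.ball s ε, 0 < t := by
    intro t ht
    rw [Real.ball_eq_Ioo] at ht
    have := ht.1; simp only [hεdef] at this; linarith
  have hballK : ∀ t ∈ Metric.ball s ε, ∀ y ∈ Icc (-1:ℝ) 1, (t, y) ∈ K := by
    intro t ht y hy
    rw [Real.ball_eq_Ioo] at ht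
    exact ⟨⟨le_of_lt ht.1, le_of_lt ht.2⟩, hy⟩
  -- the integrand of the energy and its "nice" version
  set Ffun : ℝ → ℝ → ℝ := fun t y => (1 - y^2) * (dY u t y)^2 + (dS u t y)^2 with hFdef
  set Nfun : ℝ → ℝ → ℝ := fun t y =>
    (1 - y^2) * (D1 u (t, y) (0, 1))^2 + (D1 u (t, y) (1, 0))^2 with hNdef
  have hFN : ∀ t, 0 < t → ∀ y ∈ Icc (-1:ℝ) 1, Ffun t y = Nfun t y := by
    intro t ht y hy
    by_cases hyo : y ∈ Ioo (-1:ℝ) 1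
    · simp only [hFdef, hNdef, dY_eq hu (le_of_lt ht) hyo, dS_eq hu ht hy, P1, P2]
    · have hy2 : y^2 = 1 := by
        rcases (by
          rcases eq_or_lt_of_le hy.1 with h | h
          · exact Or.inl h.symm
          rcases eq_or_lt_of_le hy.2 with h' | h'
          · exact Or.inr h'
          · exact absurd ⟨h, h'⟩ hyo : y = -1 ∨ y = 1) with h | h <;> rw [h] <;> ring
      simp only [hFdef, hNdef, hy2, sub_self, zero_mul, zero_add,
        dS_eq hu ht hy, P1]
  have hNcont : ∀ t, 0 ≤ t → ContinuousOn (fun y => Nfun t y) (Icc (-1:ℝ) 1) := by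
    intro t ht
    have hline : ContinuousOn (fun y : ℝ => ((t, y) : ℝ × ℝ)) (Icc (-1:ℝ) 1) :=
      (continuous_const.prodMk continuous_id).continuousOn
    have hmap : MapsTo (fun y : ℝ => ((t, y) : ℝ × ℝ)) (Icc (-1:ℝ) 1) SS :=
      fun y hy => ⟨ht, hy⟩
    have h1 : ContinuousOn (fun y : ℝ => D1 u (t, y) (0, 1)) (Icc (-1:ℝ) 1) :=
      (continuousOn_D1_apply hu (0, 1)).comp hline hmap
    have h2 : ContinuousOn (fun y : ℝ => D1 u (t, y) (1, 0)) (Icc (-1:ℝ) 1) :=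
      (continuousOn_D1_apply hu (1, 0)).comp hline hmap
    exact ((continuous_const.sub (continuous_pow 2)).continuousOn.mul (h1.pow 2)).add
      (h2.pow 2)
  have hBcont : ContinuousOn (fun y => Bfun u (s, y)) (Icc (-1:ℝ) 1) := by
    have hline : ContinuousOn (fun y : ℝ => ((s, y) : ℝ × ℝ)) (Icc (-1:ℝ) 1) :=
      (continuous_const.prodMk continuous_id).continuousOn
    exact (continuousOn_Bfun hu).comp hline fun y hy => ⟨le_of_lt hs0, hy⟩
  have hIoc : Set.uIoc (-1:ℝ) 1 = Ioc (-1:ℝ) 1 := uIoc_of_le (by norm_num)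
  have hIocIcc : Ioc (-1:ℝ) 1 ⊆ Icc (-1:ℝ) 1 := Ioc_subset_Icc_self
  -- differentiation under the integral sign
  have key := intervalIntegral.hasDerivAt_integral_of_dominated_loc_of_deriv_le
    (F := Ffun) (F' := fun t y => Bfun u (t, y)) (bound := fun _ => C)
    (a := (-1:ℝ)) (b := 1) (μ := volume) (x₀ := s) (Metric.ball_mem_nhds s hε)
    (by -- hF_meas
      filter_upwards [Ioi_mem_nhds hs0] with t ht
      rw [hIoc]
      exact (ContinuousOn.congr ((hNcont t (le_of_lt ht)).mono hIocIcc)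
        (fun y hy => hFN t ht y (hIocIcc hy))).aestronglyMeasurable measurableSet_Ioc)
    (by -- hF_int
      apply ContinuousOn.intervalIntegrable
      rw [uIcc_of_le (by norm_num : (-1:ℝ) ≤ 1)]
      exact ContinuousOn.congr (hNcont s (le_of_lt hs0)) (fun y hy => hFN s hs0 y hy))
    (by -- hF'_meas
      rw [hIoc]
      exact (hBcont.mono hIocIcc).aestronglyMeasurable measurableSet_Ioc)
    (by -- h_bound
      filter_upwards with y hy t ht
      exact hC _ (hballK t ht y (hIocIcc (hIoc ▸ hy))))
    (by -- bound_integrable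
      exact intervalIntegrable_const)
    (by -- h_diff
      have h1 : ∀ᵐ (y : ℝ), y ∉ ({1} : Set ℝ) :=
        measure_eq_zero_iff_ae_notMem.mp (measure_singleton _)
      filter_upwards [h1] with y hy1 hy t ht
      have hyIoc : y ∈ Ioc (-1:ℝ) 1 := hIoc ▸ hy
      have hyo : y ∈ Ioo (-1:ℝ) 1 :=
        ⟨hyIoc.1, lt_of_le_of_ne hyIoc.2 (fun h => hy1 (by simp [h]))⟩
      have hyIcc : y ∈ Icc (-1:ℝ) 1 := hIocIcc hyIoc
      have ht0 : 0 < t := hball t ht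
      have hN : HasDerivAt (fun t' => Nfun t' y) (Bfun u (t, y)) t := by
        have h2 : HasDerivAt (fun t' => D1 u (t', y) (0, 1)) (D2 u (t, y) (1, 0) (0, 1)) t :=
          hasDerivAt_D1_s hu ht0 hyIcc (0, 1)
        have h1' : HasDerivAt (fun t' => D1 u (t', y) (1, 0)) (D2 u (t, y) (1, 0) (1, 0)) t :=
          hasDerivAt_D1_s hu ht0 hyIcc (1, 0)
        have := ((h2.pow 2).const_mul (1 - y^2)).add (h1'.pow 2)
        refine this.congr_deriv (Eq.symm ?_)
        simp only [Bfun]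
        ring
      apply hN.congr_of_eventuallyEq
      filter_upwards [Ioi_mem_nhds ht0] with t' ht'
      exact hFN t' ht' y hyIcc)
  have hI : HasDerivAt (fun t => ∫ y in (-1:ℝ)..1, Ffun t y)
      (∫ y in (-1:ℝ)..1, Bfun u (s, y)) s := key.2
  -- slice continuity of first-order data
  have hslice : ∀ t : ℝ, 0 ≤ t → ∀ v : ℝ × ℝ,
      ContinuousOn (fun y : ℝ => D1 u (t, y) v) (Icc (-1:ℝ) 1) := by
    intro t ht v
    exact (continuousOn_D1_apply hu v).comp
      (continuous_const.prodMk continuous_id).continuousOn (fun y hy => ⟨ht, hy⟩)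
  -- the two pieces of the energy integrand, identified with nice versions on [-1,1]
  have hFN1 : ∀ t, 0 < t → ∀ y ∈ Icc (-1:ℝ) 1,
      (1 - y^2) * (dY u t y)^2 = (1 - y^2) * (D1 u (t, y) (0, 1))^2 := by
    intro t ht y hy
    by_cases hyo : y ∈ Ioo (-1:ℝ) 1
    · rw [dY_eq hu (le_of_lt ht) hyo]; rfl
    · have hy2 : y^2 = 1 := by
        rcases (by
          rcases eq_or_lt_of_le hy.1 with h | h
          · exact Or.inl h.symm
          rcases eq_or_lt_of_le hy.2 with h' | h'
          · exact Or.inr h'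
          · exact absurd ⟨h, h'⟩ hyo : y = -1 ∨ y = 1) with h | h <;> rw [h] <;> ring
      rw [hy2]; ring
  have hFN2 : ∀ t, 0 < t → ∀ y ∈ Icc (-1:ℝ) 1,
      (dS u t y)^2 = (D1 u (t, y) (1, 0))^2 := by
    intro t ht y hy
    rw [dS_eq hu ht hy]; rfl
  -- identify the energy with (1/2) ∫ Ffun near s
  have hEeq : energyFun u =ᶠ[𝓝 s] fun t => (1/2) * ∫ y in (-1:ℝ)..1, Ffun t y := by
    filter_upwards [Ioi_mem_nhds hs0] with t ht
    have i1 : IntervalIntegrable (fun y => (1 - y^2) * (dY u t y)^2) volume (-1) 1 := by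
      apply ContinuousOn.intervalIntegrable
      rw [uIcc_of_le (by norm_num : (-1:ℝ) ≤ 1)]
      exact ContinuousOn.congr
        ((continuous_const.sub (continuous_pow 2)).continuousOn.mul
          ((hslice t (le_of_lt ht) (0, 1)).pow 2))
        (fun y hy => hFN1 t ht y hy)
    have i2 : IntervalIntegrable (fun y => (dS u t y)^2) volume (-1) 1 := by
      apply ContinuousOn.intervalIntegrable
      rw [uIcc_of_le (by norm_num : (-1:ℝ) ≤ 1)]
      exact ContinuousOn.congr ((hslice t (le_of_lt ht) (1, 0)).pow 2)
        (fun y hy => hFN2 t ht y hy)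
    show energyFun u t = (1/2) * ∫ y in (-1:ℝ)..1, Ffun t y
    rw [energyFun, ← intervalIntegral.integral_add i1 i2]
  have hE : HasDerivAt (energyFun u)
      ((1/2) * ∫ y in (-1:ℝ)..1, Bfun u (s, y)) s :=
    (hI.const_mul (1/2 : ℝ)).congr_of_eventuallyEq hEeq
  -- fundamental theorem of calculus for the flux function G
  set G : ℝ → ℝ := fun y => (1 - y^2) * (D1 u (s, y) (0, 1)) * (D1 u (s, y) (1, 0))
      - y * (D1 u (s, y) (1, 0))^2 with hGdef
  have hGc : ContinuousOn G (Icc (-1:ℝ) 1) := by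
    simp only [hGdef]
    exact (((continuous_const.sub (continuous_pow 2)).continuousOn.mul
      (hslice s (le_of_lt hs0) (0, 1))).mul (hslice s (le_of_lt hs0) (1, 0))).sub
      (continuousOn_id.mul ((hslice s (le_of_lt hs0) (1, 0)).pow 2))
  have hGd : ∀ y ∈ Ioo (-1:ℝ) 1, HasDerivAt G ((1/2) * Bfun u (s, y)) y := by
    intro y hy
    have h1 : HasDerivAt (fun y' => D1 u (s, y') (1, 0)) (D2 u (s, y) (0, 1) (1, 0)) y :=
      hasDerivAt_D1_y hu (le_of_lt hs0) hy (1, 0)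
    have h2 : HasDerivAt (fun y' => D1 u (s, y') (0, 1)) (D2 u (s, y) (0, 1) (0, 1)) y :=
      hasDerivAt_D1_y hu (le_of_lt hs0) hy (0, 1)
    have hc : HasDerivAt (fun y' : ℝ => 1 - y'^2) (-(2 * y)) y := by
      simpa using (hasDerivAt_pow 2 y).const_sub 1
    have hG := ((hc.mul h2).mul h1).sub ((hasDerivAt_id y).mul (h1.pow 2))
    rw [hGdef]
    refine hG.congr_deriv (Eq.symm ?_)
    have hpde := pde_Q hu heq hs0 hy
    have hsym := symm_Q hu hs0 hy
    simp only [P1, P2, Q11, Q12, Q21, Q22] at hpde hsym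
    simp only [Bfun, id_eq, Pi.mul_apply, Pi.pow_apply]
    push_cast
    linear_combination (D1 u (s, y) (1, 0)) * hpde
      + ((1 - y^2) * (D1 u (s, y) (0, 1)) - 2 * y * (D1 u (s, y) (1, 0))) * hsym
  have hGint : IntervalIntegrable (fun y => (1/2) * Bfun u (s, y)) volume (-1) 1 := by
    apply ContinuousOn.intervalIntegrable
    rw [uIcc_of_le (by norm_num : (-1:ℝ) ≤ 1)]
    exact continuousOn_const.mul hBcont
  have hFTC : ∫ y in (-1:ℝ)..1, (1/2) * Bfun u (s, y) = G 1 - G (-1) :=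
    intervalIntegral.integral_eq_sub_of_hasDerivAt_of_le (by norm_num) hGc hGd hGint
  have hval : (1/2) * ∫ y in (-1:ℝ)..1, Bfun u (s, y)
      = -(dS u s (-1))^2 - (dS u s 1)^2 := by
    rw [← intervalIntegral.integral_const_mul, hFTC]
    have hG1 : G 1 = -(D1 u (s, 1) (1, 0))^2 := by norm_num [hGdef]
    have hGm1 : G (-1) = (D1 u (s, -1) (1, 0))^2 := by norm_num [hGdef]
    rw [hG1, hGm1, dS_eq hu hs0 (by norm_num : (-1:ℝ) ∈ Icc (-1:ℝ) 1),
      dS_eq hu hs0 (by norm_num : (1:ℝ) ∈ Icc (-1:ℝ) 1)]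
    simp only [P1]
    ring
  rw [← hval]
  exact hE
end
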